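/- Let k, γ > 0 and b ≥ 0, and set φ₁ := ∫₀^∞ f(τ)e^{−γτ}dτ, φ₂ := ∫₀^∞ f(τ)e^{−2γτ}dτ. Consider the joint recursion modeling the first two moments of a gene product with synthesis rate k, degradation rate γ, halving at division, and binomial-type partitioning noise of magnitude b: m_s = (1/2)[φ₁ m_{s−1} + (k/γ)(1−φ₁)] and q_s = (1/4)[φ₂ q_{s−1} + 2(k/γ)(φ₁−φ₂)m_{s−1} + (k/γ)²(1−2φ₁+φ₂)] + b[φ₁ m_{s−1} + (k/γ)(1−φ₁)]. Then (m_s, q_s) converges for every initial value, and the steady-state second moment x̄² := ∫₀^∞ p(τ)·[e^{−2γτ}·q_∞ + 2(k/γ)(e^{−γτ}−e^{−2γτ})·m_∞ + (k/γ)²(1−e^{−γτ})²] dτ (with (m_∞, q_∞) the limit) equals (b·k/(2γ²m₁))·((1−φ₂)/(1−φ₂/4))·((1−φ₁)/(1−φ₁/2)) + k²/γ² + (k²/(16γ³m₁))·(−14 + 17φ₁ + φ₂(2 − 5φ₁))/((1 − φ₂/4)(1 − φ₁/2)). (Equation (48): second moment of gene product level with noisy cell-cycle times and partitioning errors; b =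 0 recovers equation (44).) -/

import Mathlib

open MeasureTheory Filter

lemma key_swap (f S : ℝ → ℝ) (hf_m : Measurable f) (hS_m : Measurable S)
    (hf_nn : ∀ τ, 0 ≤ f τ)
    (hS_eq : ∀ τ, 0 < τ → ENNReal.ofReal (S τ) = ∫⁻ y in Set.Ioi τ, ENNReal.ofReal (f y))
    (hS_nn : ∀ τ, 0 < τ → 0 ≤ S τ)
    (g G : ℝ → ℝ) (hg_m : Measurable g) (hg_nn : ∀ τ, 0 ≤ g τ)
    (hG : ∀ y, 0 < y → G y = ∫ τ in Set.Ioo 0 y, g τ)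
    (hg_int : ∀ y, 0 < y → IntegrableOn g (Set.Ioo 0 y))
    (hfG_int : IntegrableOn (fun y => f y * G y) (Set.Ioi 0)) :
    IntegrableOn (fun τ => S τ * g τ) (Set.Ioi 0) ∧
    ∫ τ in Set.Ioi 0, S τ * g τ = ∫ y in Set.Ioi 0, f y * G y := by
  have hfG_nn : ∀ᵐ y ∂(volume.restrict (Set.Ioi (0:ℝ))), 0 ≤ f y * G y := by
    rw [ae_restrict_iff' measurableSet_Ioi]
    refine ae_of_all _ fun y hy => mul_nonneg (hf_nn y) ?_
    rw [hG y hy]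
    exact setIntegral_nonneg measurableSet_Ioo fun x _ => hg_nn x
  have hSg_nn : ∀ᵐ τ ∂(volume.restrict (Set.Ioi (0:ℝ))), 0 ≤ S τ * g τ := by
    rw [ae_restrict_iff' measurableSet_Ioi]
    exact ae_of_all _ fun τ hτ => mul_nonneg (hS_nn τ hτ) (hg_nn τ)
  -- the lintegral identity
  have h1 : (∫⁻ τ in Set.Ioi (0:ℝ), ENNReal.ofReal (S τ * g τ))
      = ∫⁻ y in Set.Ioi (0:ℝ), ENNReal.ofReal (f y * G y) := by
    have step1 : (∫⁻ τ in Set.Ioi (0:ℝ), ENNReal.ofReal (S τ * g τ))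
        = ∫⁻ τ in Set.Ioi (0:ℝ), ∫⁻ y, (Set.Ioi τ).indicator
            (fun y => ENNReal.ofReal (f y) * ENNReal.ofReal (g τ)) y := by
      refine setLIntegral_congr_fun measurableSet_Ioi (fun τ hτ => ?_)
      rw [lintegral_indicator measurableSet_Ioi]
      rw [lintegral_mul_const' (ENNReal.ofReal (g τ)) _ (by simp)]
      rw [← hS_eq τ hτ, ENNReal.ofReal_mul (hS_nn τ hτ)]
    have step2 : (∫⁻ τ in Set.Ioi (0:ℝ), ∫⁻ y, (Set.Ioi τ).indicator
            (fun y => ENNReal.ofReal (f y) * ENNReal.ofReal (g τ)) y)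
        = ∫⁻ y, ∫⁻ τ in Set.Ioi (0:ℝ), (Set.Ioi τ).indicator
            (fun y => ENNReal.ofReal (f y) * ENNReal.ofReal (g τ)) y := by
      apply lintegral_lintegral_swap
      have : Function.uncurry (fun τ y => (Set.Ioi τ).indicator
            (fun y => ENNReal.ofReal (f y) * ENNReal.ofReal (g τ)) y)
          = {q : ℝ × ℝ | q.1 < q.2}.indicator
            (fun q => ENNReal.ofReal (f q.2) * ENNReal.ofReal (g q.1)) := by
        funext p
        simp only [Function.uncurry, Set.indicator, Set.mem_Ioi, Set.mem_setOf_eq]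
      rw [this]
      exact (Measurable.indicator
        ((hf_m.comp measurable_snd).ennreal_ofReal.mul
          (hg_m.comp measurable_fst).ennreal_ofReal)
        (measurableSet_lt measurable_fst measurable_snd)).aemeasurable
    have step3 : (∫⁻ y, ∫⁻ τ in Set.Ioi (0:ℝ), (Set.Ioi τ).indicator
            (fun y => ENNReal.ofReal (f y) * ENNReal.ofReal (g τ)) y)
        = ∫⁻ y in Set.Ioi (0:ℝ), ENNReal.ofReal (f y * G y) := by
      have inner : ∀ y : ℝ, (∫⁻ τ in Set.Ioi (0:ℝ), (Set.Ioi τ).indicator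
            (fun y => ENNReal.ofReal (f y) * ENNReal.ofReal (g τ)) y)
          = ENNReal.ofReal (f y) * ∫⁻ τ in Set.Ioo (0:ℝ) y, ENNReal.ofReal (g τ) := by
        intro y
        have flip : ∀ τ : ℝ, (Set.Ioi τ).indicator
              (fun y => ENNReal.ofReal (f y) * ENNReal.ofReal (g τ)) y
            = (Set.Iio y).indicator
              (fun τ => ENNReal.ofReal (f y) * ENNReal.ofReal (g τ)) τ := by
          intro τ
          simp only [Set.indicator, Set.mem_Ioi, Set.mem_Iio]
        simp_rw [flip]
        rw [lintegral_indicator measurableSet_Iio,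
          Measure.restrict_restrict measurableSet_Iio]
        have : Set.Iio y ∩ Set.Ioi (0:ℝ) = Set.Ioo 0 y := by
          ext x; simp [Set.mem_Ioo, and_comm]
        rw [this, lintegral_const_mul' _ _ (by simp)]
      simp_rw [inner]
      have hzero : (fun y : ℝ => ENNReal.ofReal (f y)
            * ∫⁻ τ in Set.Ioo (0:ℝ) y, ENNReal.ofReal (g τ))
          = (Set.Ioi (0:ℝ)).indicator (fun y => ENNReal.ofReal (f y)
            * ∫⁻ τ in Set.Ioo (0:ℝ) y, ENNReal.ofReal (g τ)) := by
        funext y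
        by_cases hy : 0 < y
        · rw [Set.indicator_of_mem (Set.mem_Ioi.2 hy)]
        · rw [Set.indicator_of_notMem (by simpa using hy)]
          have : Set.Ioo (0:ℝ) y = ∅ := Set.Ioo_eq_empty (by linarith [not_lt.1 hy])
          rw [this]
          simp
      rw [hzero, lintegral_indicator measurableSet_Ioi]
      refine setLIntegral_congr_fun measurableSet_Ioi (fun y hy => ?_)
      have : (∫⁻ τ in Set.Ioo (0:ℝ) y, ENNReal.ofReal (g τ)) = ENNReal.ofReal (G y) := by
        rw [hG y hy, ofReal_integral_eq_lintegral_ofReal (hg_int y hy)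
          (ae_of_all _ fun τ => hg_nn τ)]
      rw [this, ← ENNReal.ofReal_mul (hf_nn y)]
    rw [step1, step2, step3]
  have hfin : (∫⁻ y in Set.Ioi (0:ℝ), ENNReal.ofReal (f y * G y)) < ⊤ := by
    rw [← ofReal_integral_eq_lintegral_ofReal hfG_int hfG_nn]
    exact ENNReal.ofReal_lt_top
  have hint : IntegrableOn (fun τ => S τ * g τ) (Set.Ioi 0) := by
    refine ⟨(hS_m.mul hg_m).aestronglyMeasurable, ?_⟩
    rw [hasFiniteIntegral_iff_ofReal hSg_nn, h1]
    exact hfin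
  refine ⟨hint, ?_⟩
  rw [integral_eq_lintegral_of_nonneg_ae hSg_nn (hS_m.mul hg_m).aestronglyMeasurable,
    integral_eq_lintegral_of_nonneg_ae hfG_nn hfG_int.aestronglyMeasurable, h1]

lemma geom_rec_tendsto_zero (a r C : ℝ) (ha0 : 0 ≤ a) (ha1 : a < 1)
    (hr0 : 0 ≤ r) (hr1 : r < 1) (hC : 0 ≤ C) (u : ℕ → ℝ)
    (h : ∀ s, |u (s + 1)| ≤ a * |u s| + C * r ^ s) :
    Tendsto u atTop (nhds 0) := by
  set ρ : ℝ := (1 + max a r) / 2 with hρdef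
  have hmax1 : max a r < 1 := max_lt ha1 hr1
  have hρa : a < ρ := by
    have := le_max_left a r
    simp only [hρdef]; linarith
  have hρr : r ≤ ρ := by
    have := le_max_right a r
    simp only [hρdef]; linarith
  have hρ0 : 0 < ρ := by
    have := le_max_left a r
    simp only [hρdef]; linarith
  have hρ1 : ρ < 1 := by simp only [hρdef]; linarith
  set M : ℝ := |u 0| + C / (ρ - a) with hMdef
  have hρa' : 0 < ρ - a := by linarith
  have hM0 : 0 ≤ M := add_nonneg (abs_nonneg _) (div_nonneg hC hρa'.le)
  have hMC : C ≤ M * (ρ - a) := by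
    have : C / (ρ - a) ≤ M := by
      simp only [hMdef]; linarith [abs_nonneg (u 0)]
    calc C = C / (ρ - a) * (ρ - a) := by field_simp
    _ ≤ M * (ρ - a) := by nlinarith
  have key : ∀ s, |u s| ≤ M * ρ ^ s := by
    intro s
    induction s with
    | zero => simp [hMdef]; positivity
    | succ n ih =>
      calc |u (n + 1)| ≤ a * |u n| + C * r ^ n := h n
      _ ≤ a * (M * ρ ^ n) + C * ρ ^ n := by
          have h1 : r ^ n ≤ ρ ^ n := pow_le_pow_left₀ hr0 hρr n
          have h2 : (0:ℝ) ≤ ρ ^ n := by positivity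
          nlinarith [abs_nonneg (u n)]
      _ = (a * M + C) * ρ ^ n := by ring
      _ ≤ (M * ρ) * ρ ^ n := by
          have : a * M + C ≤ M * ρ := by nlinarith
          have h2 : (0:ℝ) ≤ ρ ^ n := by positivity
          nlinarith
      _ = M * ρ ^ (n + 1) := by ring
  have : Tendsto (fun s : ℕ => M * ρ ^ s) atTop (nhds 0) := by
    have := tendsto_pow_atTop_nhds_zero_of_abs_lt_one (r := ρ)
      (by rw [abs_of_pos hρ0]; exact hρ1)
    simpa using this.const_mul M
  exact squeeze_zero_norm (fun n => by simpa using key n) this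

set_option maxHeartbeats 2000000 in
/-- **Equation (48): second moment of the gene product level with noisy cell-cycle times and
partitioning errors** (`b = 0` recovers equation (44)). -/
theorem gene_product_second_moment
    (f : ℝ → ℝ) (hf_cont : Continuous f)
    (hf_pos : ∀ τ : ℝ, 0 < τ → 0 < f τ) (hf_supp : ∀ τ : ℝ, τ ≤ 0 → f τ = 0)
    (hf_prob : ∫ τ in Set.Ioi (0:ℝ), f τ = 1)
    (S : ℝ → ℝ) (hS : ∀ τ : ℝ, S τ = 1 - ∫ y in (0:ℝ)..τ, f y)
    (m₁ : ℝ) (hm₁ : m₁ = ∫ τ in Set.Ioi (0:ℝ), τ * f τ)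
    (hm₁_int : IntegrableOn (fun τ : ℝ => τ * f τ) (Set.Ioi 0))
    (hm₁_pos : 0 < m₁)
    (p : ℝ → ℝ) (hp : ∀ τ : ℝ, p τ = S τ / m₁)
    (k γ b : ℝ) (hk : 0 < k) (hγ : 0 < γ) (hb : 0 ≤ b)
    (φ₁ : ℝ) (hφ₁ : φ₁ = ∫ τ in Set.Ioi (0:ℝ), f τ * Real.exp (-γ * τ))
    (φ₂ : ℝ) (hφ₂ : φ₂ = ∫ τ in Set.Ioi (0:ℝ), f τ * Real.exp (-2 * γ * τ)) :
    ∀ m q : ℕ → ℝ,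
      (∀ s : ℕ, m (s + 1) = (1 / 2) * (φ₁ * m s + (k / γ) * (1 - φ₁))) →
      (∀ s : ℕ, q (s + 1) =
        (1 / 4) * (φ₂ * q s + 2 * (k / γ) * (φ₁ - φ₂) * m s +
          (k / γ) ^ 2 * (1 - 2 * φ₁ + φ₂)) +
        b * (φ₁ * m s + (k / γ) * (1 - φ₁))) →
      ∃ mL qL : ℝ, Tendsto m atTop (nhds mL) ∧ Tendsto q atTop (nhds qL) ∧
        (∫ τ in Set.Ioi (0:ℝ),
            p τ * (Real.exp (-2 * γ * τ) * qL +
              2 * (k / γ) * (Real.exp (-γ * τ) - Real.exp (-2 * γ * τ)) * mL +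
              (k / γ) ^ 2 * (1 - Real.exp (-γ * τ)) ^ 2)) =
          (b * k / (2 * γ ^ 2 * m₁)) * ((1 - φ₂) / (1 - φ₂ / 4)) * ((1 - φ₁) / (1 - φ₁ / 2)) +
            k ^ 2 / γ ^ 2 +
            (k ^ 2 / (16 * γ ^ 3 * m₁)) *
              ((-14 + 17 * φ₁ + φ₂ * (2 - 5 * φ₁)) / ((1 - φ₂ / 4) * (1 - φ₁ / 2))) := by
  intro m q hm_rec hq_rec
  -- basic facts about f
  have hf_nn : ∀ τ, 0 ≤ f τ := by
    intro τ
    rcases le_or_gt τ 0 with h | h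
    · rw [hf_supp τ h]
    · exact (hf_pos τ h).le
  have hf_int : IntegrableOn f (Set.Ioi 0) := by
    by_contra h
    rw [MeasureTheory.integral_undef h] at hf_prob
    norm_num at hf_prob
  have hf_m : Measurable f := hf_cont.measurable
  -- integrability of f times exponentials
  have hfe_int : ∀ c : ℝ, 0 < c →
      IntegrableOn (fun y => f y * Real.exp (-c * y)) (Set.Ioi 0) := by
    intro c hc
    refine hf_int.mono' (hf_cont.mul
      (Real.continuous_exp.comp (continuous_const.mul continuous_id))).aestronglyMeasurable ?_
    rw [MeasureTheory.ae_restrict_iff' measurableSet_Ioi]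
    refine MeasureTheory.ae_of_all _ fun y hy => ?_
    rw [Real.norm_eq_abs, abs_mul, abs_of_nonneg (hf_nn y), abs_of_nonneg (Real.exp_pos _).le]
    have hy' : (0:ℝ) < y := hy
    exact mul_le_of_le_one_right (hf_nn y) (Real.exp_le_one_iff.2 (by nlinarith))
  -- bounds on φ₁, φ₂
  have hφ_nn : ∀ c : ℝ, 0 < c → 0 ≤ ∫ τ in Set.Ioi (0:ℝ), f τ * Real.exp (-c * τ) := by
    intro c _
    exact setIntegral_nonneg measurableSet_Ioi fun τ _ =>
      mul_nonneg (hf_nn τ) (Real.exp_pos _).le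
  have hφ_le : ∀ c : ℝ, 0 < c → (∫ τ in Set.Ioi (0:ℝ), f τ * Real.exp (-c * τ)) ≤ 1 := by
    intro c hc
    have hsub : 0 ≤ ∫ τ in Set.Ioi (0:ℝ), (f τ - f τ * Real.exp (-c * τ)) := by
      refine setIntegral_nonneg measurableSet_Ioi fun τ hτ => ?_
      have hτ' : (0:ℝ) < τ := hτ
      have h1 : Real.exp (-c * τ) ≤ 1 := Real.exp_le_one_iff.2 (by nlinarith)
      nlinarith [hf_nn τ]
    rw [integral_sub hf_int (hfe_int c hc), hf_prob] at hsub
    linarith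
  have h2γ : (0:ℝ) < 2 * γ := by linarith
  have hφ₂' : φ₂ = ∫ τ in Set.Ioi (0:ℝ), f τ * Real.exp (-(2 * γ) * τ) := by
    rw [hφ₂]
    congr 1
    funext τ
    norm_num
  have hφ₁_nn : 0 ≤ φ₁ := by rw [hφ₁]; exact hφ_nn γ hγ
  have hφ₁_le : φ₁ ≤ 1 := by rw [hφ₁]; exact hφ_le γ hγ
  have hφ₂_nn : 0 ≤ φ₂ := by rw [hφ₂']; exact hφ_nn (2 * γ) h2γ
  have hφ₂_le : φ₂ ≤ 1 := by rw [hφ₂']; exact hφ_le (2 * γ) h2γ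
  have hγ' : γ ≠ 0 := hγ.ne'
  have hm₁' : m₁ ≠ 0 := hm₁_pos.ne'
  have h2φ₁ : (2:ℝ) - φ₁ ≠ 0 := by linarith
  have h4φ₂ : (4:ℝ) - φ₂ ≠ 0 := by linarith
  have h1φ₁ : (1:ℝ) - φ₁ / 2 ≠ 0 := by linarith
  have h1φ₂ : (1:ℝ) - φ₂ / 4 ≠ 0 := by linarith
  -- limits
  set mL : ℝ := k * (1 - φ₁) / (γ * (2 - φ₁)) with hmL
  set qL : ℝ := (2 * (k / γ) * (φ₁ - φ₂) * mL + (k / γ) ^ 2 * (1 - 2 * φ₁ + φ₂)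
      + 4 * b * (φ₁ * mL + (k / γ) * (1 - φ₁))) / (4 - φ₂) with hqL
  have m_fix : (1 / 2) * (φ₁ * mL + (k / γ) * (1 - φ₁)) = mL := by
    rw [hmL]; field_simp; ring
  have q_fix : (1 / 4) * (φ₂ * qL + 2 * (k / γ) * (φ₁ - φ₂) * mL +
      (k / γ) ^ 2 * (1 - 2 * φ₁ + φ₂)) + b * (φ₁ * mL + (k / γ) * (1 - φ₁)) = qL := by
    rw [hqL]; field_simp; ring
  -- convergence of m
  have hm_geo : ∀ s, m s - mL = (φ₁ / 2) ^ s * (m 0 - mL) := by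
    intro s
    induction s with
    | zero => simp
    | succ n ih =>
      rw [hm_rec n]
      linear_combination (φ₁ / 2) * ih + m_fix
  have hr1 : |φ₁ / 2| < 1 := by rw [abs_of_nonneg (by linarith)]; linarith
  have hm_tendsto : Tendsto m atTop (nhds mL) := by
    have h0 : Tendsto (fun s : ℕ => (φ₁ / 2) ^ s * (m 0 - mL)) atTop (nhds 0) := by
      simpa using (tendsto_pow_atTop_nhds_zero_of_abs_lt_one hr1).mul_const (m 0 - mL)
    have := h0.const_add mL
    simp only [add_zero] at this
    refine this.congr fun s => ?_
    rw [← hm_geo s]; ring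
  -- convergence of q
  have hq_geo : ∀ s, q (s + 1) - qL = (φ₂ / 4) * (q s - qL)
      + (((1 / 2) * (k / γ) * (φ₁ - φ₂) + b * φ₁) * (m 0 - mL)) * (φ₁ / 2) ^ s := by
    intro s
    have hms : m s = (φ₁ / 2) ^ s * (m 0 - mL) + mL := by linarith [hm_geo s]
    rw [hq_rec s, hms]
    linear_combination q_fix
  have hq_tendsto : Tendsto q atTop (nhds qL) := by
    have hu : Tendsto (fun s => q s - qL) atTop (nhds 0) := by
      refine geom_rec_tendsto_zero (φ₂ / 4) (φ₁ / 2)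
        (|((1 / 2) * (k / γ) * (φ₁ - φ₂) + b * φ₁) * (m 0 - mL)|)
        (by linarith) (by linarith) (by linarith) (by linarith) (abs_nonneg _)
        (fun s => q s - qL) (fun s => ?_)
      show |q (s + 1) - qL| ≤ φ₂ / 4 * |q s - qL|
        + |((1 / 2) * (k / γ) * (φ₁ - φ₂) + b * φ₁) * (m 0 - mL)| * (φ₁ / 2) ^ s
      rw [hq_geo s]
      calc |(φ₂ / 4) * (q s - qL)
          + (((1 / 2) * (k / γ) * (φ₁ - φ₂) + b * φ₁) * (m 0 - mL)) * (φ₁ / 2) ^ s|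
          ≤ |(φ₂ / 4) * (q s - qL)|
            + |(((1 / 2) * (k / γ) * (φ₁ - φ₂) + b * φ₁) * (m 0 - mL)) * (φ₁ / 2) ^ s| :=
          abs_add_le _ _
      _ = (φ₂ / 4) * |q s - qL|
            + |((1 / 2) * (k / γ) * (φ₁ - φ₂) + b * φ₁) * (m 0 - mL)| * (φ₁ / 2) ^ s := by
          rw [abs_mul, abs_mul, abs_of_nonneg (by linarith : (0:ℝ) ≤ φ₂ / 4),
            abs_of_nonneg (pow_nonneg (by linarith : (0:ℝ) ≤ φ₁ / 2) s)]
    have := hu.const_add qL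
    simp only [add_zero] at this
    refine this.congr fun s => by ring
  refine ⟨mL, qL, hm_tendsto, hq_tendsto, ?_⟩
  -- now the integral computation
  have hS_cont : Continuous S := by
    have : S = fun τ => 1 - ∫ y in (0:ℝ)..τ, f y := funext hS
    rw [this]
    exact continuous_const.sub (intervalIntegral.continuous_primitive
      (fun a b => hf_cont.intervalIntegrable a b) 0)
  have hS_Ioi : ∀ τ : ℝ, 0 < τ → S τ = ∫ y in Set.Ioi τ, f y := by
    intro τ hτ
    have hsplit : (∫ y in Set.Ioi (0:ℝ), f y)
        = (∫ y in Set.Ioc 0 τ, f y) + ∫ y in Set.Ioi τ, f y := by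
      rw [← MeasureTheory.setIntegral_union (Set.Ioc_disjoint_Ioi le_rfl) measurableSet_Ioi
        (hf_int.mono_set Set.Ioc_subset_Ioi_self) (hf_int.mono_set (Set.Ioi_subset_Ioi hτ.le)),
        Set.Ioc_union_Ioi_eq_Ioi hτ.le]
    rw [hS τ, intervalIntegral.integral_of_le hτ.le]
    rw [hf_prob] at hsplit
    linarith
  have hS_nn : ∀ τ : ℝ, 0 < τ → 0 ≤ S τ := by
    intro τ hτ
    rw [hS_Ioi τ hτ]
    exact setIntegral_nonneg measurableSet_Ioi fun y _ => hf_nn y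
  have hS_eq : ∀ τ : ℝ, 0 < τ →
      ENNReal.ofReal (S τ) = ∫⁻ y in Set.Ioi τ, ENNReal.ofReal (f y) := by
    intro τ hτ
    rw [hS_Ioi τ hτ]
    exact ofReal_integral_eq_lintegral_ofReal (hf_int.mono_set (Set.Ioi_subset_Ioi hτ.le))
      (ae_of_all _ fun y => hf_nn y)
  -- the exponential primitives
  have hGexp : ∀ c : ℝ, 0 < c → ∀ y : ℝ, 0 < y →
      (1 - Real.exp (-c * y)) / c = ∫ τ in Set.Ioo (0:ℝ) y, Real.exp (-c * τ) := by
    intro c hc y hy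
    rw [← MeasureTheory.integral_Ioc_eq_integral_Ioo, ← intervalIntegral.integral_of_le hy.le]
    have hderiv : ∀ x ∈ Set.uIcc (0:ℝ) y,
        HasDerivAt (fun t => -(Real.exp (-c * t) / c)) (Real.exp (-c * x)) x := by
      intro x _
      have h1 : HasDerivAt (fun t : ℝ => -c * t) (-c) x := by
        simpa using (hasDerivAt_id x).const_mul (-c)
      have h3 := (h1.exp.div_const c).neg
      refine h3.congr_deriv ?_
      field_simp
    rw [intervalIntegral.integral_eq_sub_of_hasDerivAt hderiv
      ((Real.continuous_exp.comp (continuous_const.mul continuous_id)).intervalIntegrable 0 y)]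
    simp
    ring
  -- the three integral identities
  have hexp_m : ∀ c : ℝ, Measurable fun τ : ℝ => Real.exp (-c * τ) :=
    fun c => (Real.continuous_exp.comp (continuous_const.mul continuous_id)).measurable
  have hexp_intIoo : ∀ c y : ℝ, 0 < y →
      IntegrableOn (fun τ : ℝ => Real.exp (-c * τ)) (Set.Ioo 0 y) :=
    fun c y _ => ((Real.continuous_exp.comp
      (continuous_const.mul continuous_id)).integrableOn_Icc).mono_set Set.Ioo_subset_Icc_self
  -- application of key_swap with g = exp(-c τ)
  have hkey_exp : ∀ c : ℝ, 0 < c →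
      IntegrableOn (fun τ => S τ * Real.exp (-c * τ)) (Set.Ioi 0) ∧
      (∫ τ in Set.Ioi (0:ℝ), S τ * Real.exp (-c * τ))
        = (1 - ∫ τ in Set.Ioi (0:ℝ), f τ * Real.exp (-c * τ)) / c := by
    intro c hc
    have hfG_int : IntegrableOn
        (fun y => f y * ((1 - Real.exp (-c * y)) / c)) (Set.Ioi 0) := by
      have heq : (fun y : ℝ => f y * ((1 - Real.exp (-c * y)) / c))
          = fun y => (f y - f y * Real.exp (-c * y)) / c := by
        funext y; field_simp
      rw [heq]
      exact (hf_int.sub (hfe_int c hc)).div_const c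
    obtain ⟨hi, hv⟩ := key_swap f S hf_m hS_cont.measurable hf_nn hS_eq hS_nn
      (fun τ => Real.exp (-c * τ)) (fun y => (1 - Real.exp (-c * y)) / c)
      (hexp_m c) (fun τ => (Real.exp_pos _).le) (fun y hy => hGexp c hc y hy)
      (fun y hy => hexp_intIoo c y hy) hfG_int
    refine ⟨hi, ?_⟩
    rw [hv]
    have heq : (fun y : ℝ => f y * ((1 - Real.exp (-c * y)) / c))
        = fun y => (f y - f y * Real.exp (-c * y)) / c := by
      funext y; field_simp
    rw [heq, integral_div, integral_sub hf_int (hfe_int c hc), hf_prob]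
  -- application with g = 1
  have hkey_one : IntegrableOn (fun τ => S τ * 1) (Set.Ioi 0) ∧
      (∫ τ in Set.Ioi (0:ℝ), S τ * 1) = m₁ := by
    have hfG_int : IntegrableOn (fun y : ℝ => f y * y) (Set.Ioi 0) := by
      refine hm₁_int.congr_fun (fun y _ => mul_comm y (f y)) measurableSet_Ioi
    obtain ⟨hi, hv⟩ := key_swap f S hf_m hS_cont.measurable hf_nn hS_eq hS_nn
      (fun _ => (1:ℝ)) (fun y => y) measurable_const (fun _ => zero_le_one)
      (fun y hy => by simp [Real.volume_Ioo, ENNReal.toReal_ofReal hy.le, hy.le])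
      (fun y _ => integrableOn_const measure_Ioo_lt_top.ne) hfG_int
    refine ⟨hi, ?_⟩
    rw [hv, hm₁]
    exact setIntegral_congr_fun measurableSet_Ioi fun y _ => mul_comm (f y) y
  have hint1 := (hkey_exp γ hγ).1
  have hint2 := (hkey_exp (2 * γ) h2γ).1
  have hint3 := hkey_one.1
  have hval1 : (∫ τ in Set.Ioi (0:ℝ), S τ * Real.exp (-γ * τ)) = (1 - φ₁) / γ := by
    rw [(hkey_exp γ hγ).2, ← hφ₁]
  have hval2 : (∫ τ in Set.Ioi (0:ℝ), S τ * Real.exp (-(2 * γ) * τ)) = (1 - φ₂) / (2 * γ) := by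
    rw [(hkey_exp (2 * γ) h2γ).2, ← hφ₂']
  have hval3 := hkey_one.2
  -- decompose the integrand
  have heq : (fun τ => p τ * (Real.exp (-2 * γ * τ) * qL +
        2 * (k / γ) * (Real.exp (-γ * τ) - Real.exp (-2 * γ * τ)) * mL +
        (k / γ) ^ 2 * (1 - Real.exp (-γ * τ)) ^ 2))
      = fun τ => ((2 * (k / γ) * mL - 2 * (k / γ) ^ 2) / m₁) * (S τ * Real.exp (-γ * τ))
        + ((qL - 2 * (k / γ) * mL + (k / γ) ^ 2) / m₁) * (S τ * Real.exp (-(2 * γ) * τ))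
        + ((k / γ) ^ 2 / m₁) * (S τ * 1) := by
    funext τ
    rw [hp τ]
    have h2exp : Real.exp (-2 * γ * τ) = Real.exp (-(2 * γ) * τ) := by norm_num
    have hsq : Real.exp (-(2 * γ) * τ) = Real.exp (-γ * τ) ^ 2 := by
      rw [sq, ← Real.exp_add]
      congr 1
      ring
    rw [h2exp, hsq]
    field_simp
    ring
  rw [heq]
  have i1 := hint1.const_mul ((2 * (k / γ) * mL - 2 * (k / γ) ^ 2) / m₁)
  have i2 := hint2.const_mul ((qL - 2 * (k / γ) * mL + (k / γ) ^ 2) / m₁)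
  have i3 := hint3.const_mul ((k / γ) ^ 2 / m₁)
  have h12 := MeasureTheory.integral_add (μ := volume.restrict (Set.Ioi 0)) i1 i2
  have h123 := MeasureTheory.integral_add (μ := volume.restrict (Set.Ioi 0)) (i1.add i2) i3
  simp only [Pi.add_apply] at h12 h123
  rw [h123, h12]
  simp only [MeasureTheory.integral_const_mul]
  rw [hval1, hval2, hval3]
  rw [hqL, hmL]
  field_simp
  ring
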